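/- Let k ≥ 0 and fix a sign choice. If M lies in the real linear span of the lattice functions m ↦ (mh)_∓^{(α)} a with |α| = k and a ∈ Cl_{0,n}, and satisfies D_h^± M = 0 (M is a discrete monogenic homogeneous polynomial of degree k), then Γ_h^± M = −k·M. -/

import Mathlib

open Finset

noncomputable section

/-- The quadratic form on `ℝⁿ` whose Clifford algebra is `Cl_{0,n}`:
`Q(x) = −(x₁² + ⋯ + xₙ²)`, so that the generators satisfy `eᵢeⱼ + eⱼeᵢ = −2δᵢⱼ`. -/
def negQ (n : ℕ) : QuadraticForm ℝ (Fin n → ℝ) :=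
  QuadraticMap.weightedSumSquares ℝ (fun _ : Fin n => (-1 : ℝ))

/-- The Clifford algebra `Cl_{0,n}`. -/
abbrev Cl (n : ℕ) := CliffordAlgebra (negQ n)

/-- The generators `e i` of `Cl_{0,n}`. -/
def eCl (n : ℕ) (i : Fin n) : Cl n := CliffordAlgebra.ι (negQ n) (Pi.single i 1)

/-- `1` for the forward (upper sign) choice, `-1` for the backward one. -/
def sgn (σ : Bool) : ℝ := if σ then 1 else -1

/-- Forward/backward difference `∂_h^{±i}` of a lattice function with values in a real module. -/
def fdiff {n : ℕ} {A : Type*} [AddCommGroup A] [Module ℝ A] (σ : Bool) (h : ℝ) (i : Fin n)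
    (f : (Fin n → ℤ) → A) : (Fin n → ℤ) → A := fun m =>
  if σ then h⁻¹ • (f (m + Pi.single i 1) - f m) else h⁻¹ • (f m - f (m - Pi.single i 1))

/-- `m ∓ εᵢ` (upper sign paired with the forward difference). -/
def shiftB {n : ℕ} (σ : Bool) (i : Fin n) (m : Fin n → ℤ) : Fin n → ℤ :=
  if σ then m - Pi.single i 1 else m + Pi.single i 1

/-- One-dimensional factorial power `(x)_∓^{(s)} = ∏_{k=0}^{s-1} (x ∓ k h)`
(upper sign paired with the forward difference `σ = true`). -/
def factPow (σ : Bool) (h x : ℝ) (s : ℕ) : ℝ :=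
  ∏ k ∈ range s, (x - sgn σ * k * h)

/-- Multi-index factorial power `(mh)_∓^{(α)}`. -/
def mfp {n : ℕ} (σ : Bool) (h : ℝ) (m : Fin n → ℤ) (α : Fin n → ℕ) : ℝ :=
  ∏ i, factPow σ h (m i * h) (α i)

/-- The difference Dirac operator `D_h^± = Σᵢ eᵢ ∂_h^{±i}`. -/
def Dirac (n : ℕ) (σ : Bool) (h : ℝ) (f : (Fin n → ℤ) → Cl n) : (Fin n → ℤ) → Cl n :=
  fun m => ∑ i, eCl n i * fdiff σ h i f m

/-- The Clifford vector `mh = Σᵢ (mᵢ h) eᵢ`. -/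
def vecCl (n : ℕ) (h : ℝ) (m : Fin n → ℤ) : Cl n := ∑ i, ((m i : ℝ) * h) • eCl n i

/-- The difference Euler operator `(E_h^± f)(m) = Σᵢ (mᵢ h) (∂_h^{±i} f)(m ∓ εᵢ)`. -/
def Euler (n : ℕ) (σ : Bool) (h : ℝ) (f : (Fin n → ℤ) → Cl n) : (Fin n → ℤ) → Cl n :=
  fun m => ∑ i, ((m i : ℝ) * h) • fdiff σ h i f (shiftB σ i m)

/-- The second-order operator `(A_h^± f)(m) = ∓ h Σᵢ (mᵢ h) (∂_h^{±i} ∂_h^{∓i} f)(m)`. -/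
def Aop (n : ℕ) (σ : Bool) (h : ℝ) (f : (Fin n → ℤ) → Cl n) : (Fin n → ℤ) → Cl n :=
  fun m => (-(sgn σ) * h) • ∑ i, ((m i : ℝ) * h) • fdiff σ h i (fdiff (!σ) h i f) m

/-- `L_{jk}^± f = (mⱼ h) ∂_h^{±k} f − (m_k h) ∂_h^{±j} f`. -/
def Lop (n : ℕ) (σ : Bool) (h : ℝ) (j k : Fin n) (f : (Fin n → ℤ) → Cl n) :
    (Fin n → ℤ) → Cl n :=
  fun m => ((m j : ℝ) * h) • fdiff σ h k f m - ((m k : ℝ) * h) • fdiff σ h j f m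

/-- The difference Gamma operator `Γ_h^± f = −Σ_{j<k} eⱼ e_k L_{jk}^± f − A_h^± f`. -/
def Gamma (n : ℕ) (σ : Bool) (h : ℝ) (f : (Fin n → ℤ) → Cl n) : (Fin n → ℤ) → Cl n :=
  fun m => -(∑ j, ∑ k, if j < k then eCl n j * eCl n k * Lop n σ h j k f m else 0)
    - Aop n σ h f m

/-- `B_h^± = ±h Σᵢ ∂_h^{±i}`. -/
def Bop (n : ℕ) (σ : Bool) (h : ℝ) (f : (Fin n → ℤ) → Cl n) : (Fin n → ℤ) → Cl n :=
  fun m => (sgn σ * h) • ∑ i, fdiff σ h i f m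

/-- `(C_h^± f)(m) = Σᵢ (mᵢ h) eᵢ f(m ∓ εᵢ)`. -/
def Cop (n : ℕ) (σ : Bool) (h : ℝ) (f : (Fin n → ℤ) → Cl n) : (Fin n → ℤ) → Cl n :=
  fun m => ∑ i, ((m i : ℝ) * h) • (eCl n i * f (shiftB σ i m))

/-- `V_{h,r}^± = r I + E_h^± − A_h^± + (1/2) B_h^±`. -/
def Vop (n : ℕ) (σ : Bool) (h r : ℝ) (f : (Fin n → ℤ) → Cl n) : (Fin n → ℤ) → Cl n :=
  fun m => r • f m + Euler n σ h f m - Aop n σ h f m + (1/2 : ℝ) • Bop n σ h f m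

/-- `Π_k^±`: the real span of the lattice functions `m ↦ (mh)_∓^{(α)} a` with `|α| ≤ k`. -/
def PiLe (n : ℕ) (σ : Bool) (h : ℝ) (k : ℕ) : Submodule ℝ ((Fin n → ℤ) → Cl n) :=
  Submodule.span ℝ {f | ∃ (α : Fin n → ℕ) (a : Cl n),
    (∑ i, α i) ≤ k ∧ f = fun m => mfp σ h m α • a}

/-- The space of homogeneous discrete polynomials of degree exactly `k`:
the real span of the lattice functions `m ↦ (mh)_∓^{(α)} a` with `|α| = k`. -/
def PiEq (n : ℕ) (σ : Bool) (h : ℝ) (k : ℕ) : Submodule ℝ ((Fin n → ℤ) → Cl n) :=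
  Submodule.span ℝ {f | ∃ (α : Fin n → ℕ) (a : Cl n),
    (∑ i, α i) = k ∧ f = fun m => mfp σ h m α • a}

lemma negQ_apply {n : ℕ} (v : Fin n → ℝ) : negQ n v = ∑ k, -(v k * v k) := by
  simp [negQ, QuadraticMap.weightedSumSquares_apply]

lemma eCl_sq {n : ℕ} (i : Fin n) : eCl n i * eCl n i = -1 := by
  rw [eCl, CliffordAlgebra.ι_sq_scalar, negQ_apply]
  simp [Pi.single_apply]

lemma negQ_polar {n : ℕ} {i j : Fin n} (hij : i ≠ j) :
    QuadraticMap.polar (negQ n) (Pi.single i 1) (Pi.single j 1) = 0 := by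
  simp only [QuadraticMap.polar, negQ_apply, Pi.add_apply]
  rw [← Finset.sum_sub_distrib, ← Finset.sum_sub_distrib]
  refine Finset.sum_eq_zero fun k _ => ?_
  · have h0 : (Pi.single i 1 : Fin n → ℝ) k * (Pi.single j 1 : Fin n → ℝ) k = 0 := by
      rcases eq_or_ne k i with rfl | hki
      · simp [Pi.single_eq_of_ne hij]
      · simp [Pi.single_eq_of_ne hki]
    linear_combination (-2:ℝ) * h0

lemma eCl_anticomm {n : ℕ} {i j : Fin n} (hij : i ≠ j) :
    eCl n i * eCl n j = -(eCl n j * eCl n i) := by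
  have h2 := CliffordAlgebra.ι_mul_ι_add_swap (Q := negQ n) (Pi.single i 1) (Pi.single j 1)
  rw [negQ_polar hij, map_zero] at h2
  exact eq_neg_of_add_eq_zero_left h2

lemma factPow_key (σ : Bool) (h x : ℝ) (s : ℕ) :
    x * (factPow σ h x s - factPow σ h (x - sgn σ * h) s) = sgn σ * s * h * factPow σ h x s := by
  cases s with
  | zero => simp [factPow]
  | succ t =>
    have e1 : factPow σ h x (t+1) = (∏ k ∈ range t, (x - sgn σ * (k+1) * h)) * x := by
      rw [factPow, Finset.prod_range_succ']
      simp
    have e2 : factPow σ h (x - sgn σ * h) (t+1)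
        = (∏ k ∈ range t, (x - sgn σ * (k+1) * h)) * (x - sgn σ * (t+1) * h) := by
      rw [factPow, Finset.prod_range_succ]
      congr 1
      · apply Finset.prod_congr rfl; intros k _; push_cast; ring
      · push_cast; ring
    rw [e1, e2]
    push_cast
    ring

section Ops
variable {n : ℕ} {σ : Bool} {h : ℝ}

lemma shift_eval (hh : h ≠ 0) (g : (Fin n → ℤ) → Cl n) (i : Fin n) (m : Fin n → ℤ) :
    g (shiftB σ i m) = g m - (sgn σ * h) • fdiff (!σ) h i g m := by
  have hs : h * h⁻¹ = 1 := mul_inv_cancel₀ hh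
  cases σ <;>
    simp [shiftB, fdiff, sgn, smul_smul, smul_sub, hs, neg_mul, one_mul, neg_smul] <;>
    abel

lemma fdiff_comm_same (σ τ : Bool) (i : Fin n) (f : (Fin n → ℤ) → Cl n) :
    fdiff σ h i (fdiff τ h i f) = fdiff τ h i (fdiff σ h i f) := by
  cases σ <;> cases τ <;> funext m <;>
    simp [fdiff, add_sub_cancel_right, sub_add_cancel] <;> module

lemma euler_pt (hh : h ≠ 0) (f : (Fin n → ℤ) → Cl n) (m : Fin n → ℤ) :
    Euler n σ h f m = (∑ i, ((m i : ℝ) * h) • fdiff σ h i f m) + Aop n σ h f m := by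
  unfold Euler Aop
  rw [Finset.smul_sum, ← Finset.sum_add_distrib]
  refine Finset.sum_congr rfl fun i _ => ?_
  rw [shift_eval hh (fdiff σ h i f) i m, fdiff_comm_same σ (!σ) i f]
  module

end Ops

section Gen
variable {n : ℕ} {σ : Bool} {h : ℝ}

lemma mfp_split (m : Fin n → ℤ) (α : Fin n → ℕ) (i : Fin n) :
    mfp σ h m α = factPow σ h ((m i : ℝ) * h) (α i) *
      ∏ j ∈ Finset.univ.erase i, factPow σ h ((m j : ℝ) * h) (α j) :=
  (Finset.mul_prod_erase Finset.univ _ (Finset.mem_univ i)).symm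

lemma mfp_shift (m : Fin n → ℤ) (α : Fin n → ℕ) (i : Fin n) :
    mfp σ h (shiftB σ i m) α = factPow σ h ((m i : ℝ) * h - sgn σ * h) (α i) *
      ∏ j ∈ Finset.univ.erase i, factPow σ h ((m j : ℝ) * h) (α j) := by
  rw [mfp, ← Finset.mul_prod_erase Finset.univ _ (Finset.mem_univ i)]
  congr 1
  · congr 1
    cases σ <;>
      simp [shiftB, sgn, Pi.sub_apply, Pi.add_apply, Pi.single_eq_same] <;> push_cast <;> ring
  · refine Finset.prod_congr rfl fun j hj => ?_
    have hji : j ≠ i := (Finset.mem_erase.mp hj).1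
    congr 2
    cases σ <;> simp [shiftB, Pi.sub_apply, Pi.add_apply, Pi.single_eq_of_ne hji]

lemma euler_gen_term (hh : h ≠ 0) (α : Fin n → ℕ) (a : Cl n) (i : Fin n) (m : Fin n → ℤ) :
    ((m i : ℝ) * h) • fdiff σ h i (fun m' => mfp σ h m' α • a) (shiftB σ i m)
      = (α i : ℝ) • (mfp σ h m α • a) := by
  have hinv : h⁻¹ * h = 1 := inv_mul_cancel₀ hh
  have key := factPow_key σ h ((m i : ℝ) * h) (α i)
  have hm : mfp σ h m α
      = factPow σ h ((m i : ℝ) * h) (α i) *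
        ∏ j ∈ Finset.univ.erase i, factPow σ h ((m j : ℝ) * h) (α j) := mfp_split m α i
  have hm' : mfp σ h (shiftB σ i m) α
      = factPow σ h ((m i : ℝ) * h - sgn σ * h) (α i) *
        ∏ j ∈ Finset.univ.erase i, factPow σ h ((m j : ℝ) * h) (α j) := mfp_shift m α i
  set x : ℝ := (m i : ℝ) * h
  set s : ℕ := α i
  set P : ℝ := factPow σ h x s
  set P' : ℝ := factPow σ h (x - sgn σ * h) s
  set R : ℝ := ∏ j ∈ Finset.univ.erase i, factPow σ h ((m j : ℝ) * h) (α j)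
  cases σ
  · -- backward
    have e0 : shiftB false i m = m + Pi.single i 1 := by simp [shiftB]
    have e2 : fdiff false h i (fun m' => mfp false h m' α • a) (m + Pi.single i 1)
        = (h⁻¹ * (P' * R - P * R)) • a := by
      simp only [fdiff, if_neg (by simp : ¬ (false = true))]
      rw [add_sub_cancel_right, ← e0, hm', hm, ← sub_smul, smul_smul]
    rw [e0, e2, smul_smul, hm, smul_smul]
    congr 1
    have hsgn : sgn false = -1 := rfl
    rw [hsgn] at key
    linear_combination (-(h⁻¹) * R) * key + ((s : ℝ) * P * R) * hinv
  · -- forward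
    have e0 : shiftB true i m = m - Pi.single i 1 := by simp [shiftB]
    have e2 : fdiff true h i (fun m' => mfp true h m' α • a) (m - Pi.single i 1)
        = (h⁻¹ * (P * R - P' * R)) • a := by
      simp only [fdiff, eq_self_iff_true, if_true]
      rw [sub_add_cancel, ← e0, hm', hm, ← sub_smul, smul_smul]
    rw [e0, e2, smul_smul, hm, smul_smul]
    congr 1
    have hsgn : sgn true = 1 := rfl
    rw [hsgn] at key
    linear_combination (h⁻¹ * R) * key + ((s : ℝ) * P * R) * hinv

end Gen

section Homog
variable {n : ℕ} {σ : Bool} {h : ℝ}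

lemma fdiff_add' (i : Fin n) (f g : (Fin n → ℤ) → Cl n) :
    fdiff σ h i (f + g) = fdiff σ h i f + fdiff σ h i g := by
  funext p; cases σ <;> simp [fdiff, smul_sub, smul_add] <;> abel

lemma fdiff_smul' (i : Fin n) (c : ℝ) (f : (Fin n → ℤ) → Cl n) :
    fdiff σ h i (c • f) = c • fdiff σ h i f := by
  funext p; cases σ <;> simp [fdiff, smul_sub, smul_comm h⁻¹ c]

lemma euler_add (f g : (Fin n → ℤ) → Cl n) :
    Euler n σ h (f + g) = Euler n σ h f + Euler n σ h g := by
  funext m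
  simp [Euler, fdiff_add', smul_add, Finset.sum_add_distrib]

lemma euler_smul (c : ℝ) (f : (Fin n → ℤ) → Cl n) :
    Euler n σ h (c • f) = c • Euler n σ h f := by
  funext m
  simp only [Euler, fdiff_smul', Pi.smul_apply, Finset.smul_sum]
  exact Finset.sum_congr rfl fun i _ => smul_comm _ _ _

lemma euler_zero : Euler n σ h (0 : (Fin n → ℤ) → Cl n) = 0 := by
  funext m; simp [Euler, fdiff]

lemma euler_gen (hh : h ≠ 0) (α : Fin n → ℕ) (a : Cl n) :
    Euler n σ h (fun m => mfp σ h m α • a)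
      = ((∑ i, α i : ℕ) : ℝ) • (fun m => mfp σ h m α • a) := by
  funext m
  simp only [Euler, Pi.smul_apply]
  calc ∑ i, ((m i : ℝ) * h) • fdiff σ h i (fun m' => mfp σ h m' α • a) (shiftB σ i m)
      = ∑ i, (α i : ℝ) • (mfp σ h m α • a) :=
        Finset.sum_congr rfl fun i _ => euler_gen_term hh α a i m
    _ = ((∑ i, α i : ℕ) : ℝ) • (mfp σ h m α • a) := by
        rw [← Finset.sum_smul, Nat.cast_sum]

lemma euler_homog (hh : h ≠ 0) {k : ℕ} {M : (Fin n → ℤ) → Cl n} (hM : M ∈ PiEq n σ h k) :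
    Euler n σ h M = (k : ℝ) • M := by
  refine Submodule.span_induction ?_ ?_ ?_ ?_ hM
  · rintro f ⟨α, a, hdeg, rfl⟩
    rw [euler_gen hh, hdeg]
  · simp [euler_zero]
  · intro f g _ _ hf hg
    rw [euler_add, hf, hg, smul_add]
  · intro c f _ hf
    rw [euler_smul, hf, smul_comm]

end Homog

lemma pair_lemma {N : ℕ} (u v a b : Cl N) (x y : ℝ) (huv : u * v = -(v * u)) :
    u * v * (x • a - y • b) = x • (u * (v * a)) + y • (v * (u * b)) := by
  rw [mul_sub, mul_smul_comm, mul_smul_comm, mul_assoc]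
  rw [show u * v * b = -(v * (u * b)) by rw [huv, neg_mul, mul_assoc]]
  rw [smul_neg, sub_neg_eq_add]

/-- For a discrete monogenic homogeneous polynomial `M` of degree `k`, `Γ_h^± M = −k M`. -/
theorem gamma_on_monogenic (n : ℕ) (hn : 1 ≤ n) (h : ℝ) (hh : 0 < h) (σ : Bool)
    (k : ℕ) (M : (Fin n → ℤ) → Cl n) (hM : M ∈ PiEq n σ h k)
    (hmono : Dirac n σ h M = 0) :
    Gamma n σ h M = (-(k : ℝ)) • M := by
  have hh' : h ≠ 0 := ne_of_gt hh
  have hE : Euler n σ h M = (k : ℝ) • M := euler_homog hh' hM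
  funext m
  set F : Fin n → Cl n := fun j => fdiff σ h j M m with hF
  set T : Fin n → Fin n → Cl n :=
    fun j l => ((m j : ℝ) * h) • (eCl n j * (eCl n l * F l)) with hT
  have hD : ∑ j, eCl n j * F j = 0 := by
    have := congrFun hmono m
    simpa [Dirac, hF] using this
  have hsum0 : ∑ j, ∑ l, T j l = 0 := by
    refine Finset.sum_eq_zero fun j _ => ?_
    calc ∑ l, T j l = ((m j : ℝ) * h) • (eCl n j * ∑ l, eCl n l * F l) := by
          rw [Finset.mul_sum, Finset.smul_sum]
      _ = 0 := by rw [hD, mul_zero, smul_zero]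
  have hdiag : ∀ j, T j j = -(((m j : ℝ) * h) • F j) := by
    intro j
    simp only [hT]
    rw [← mul_assoc, eCl_sq, neg_one_mul, smul_neg]
  have hG : (∑ j, ∑ l, if j < l then eCl n j * eCl n l * Lop n σ h j l M m else 0)
      = ∑ j, ((m j : ℝ) * h) • F j := by
    have step1 : ∀ j l : Fin n,
        (if j < l then eCl n j * eCl n l * Lop n σ h j l M m else 0)
          = (if j < l then T j l + T l j else 0) := by
      intro j l
      by_cases hlt : j < l
      · rw [if_pos hlt, if_pos hlt]
        have hLop : Lop n σ h j l M m = ((m j : ℝ) * h) • F l - ((m l : ℝ) * h) • F j := rfl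
        rw [hLop, pair_lemma _ _ _ _ _ _ (eCl_anticomm (ne_of_lt hlt))]
      · rw [if_neg hlt, if_neg hlt]
    calc (∑ j, ∑ l, if j < l then eCl n j * eCl n l * Lop n σ h j l M m else 0)
        = ∑ j, ∑ l, ((if j < l then T j l else 0) + (if j < l then T l j else 0)) := by
          refine Finset.sum_congr rfl fun j _ => Finset.sum_congr rfl fun l _ => ?_
          rw [step1]
          by_cases hlt : j < l <;> simp [hlt]
      _ = (∑ j, ∑ l, if j < l then T j l else 0) + (∑ j, ∑ l, if j < l then T l j else 0) := by
          rw [← Finset.sum_add_distrib]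
          exact Finset.sum_congr rfl fun j _ => Finset.sum_add_distrib
      _ = (∑ j, ∑ l, if j < l then T j l else 0) + (∑ j, ∑ l, if l < j then T j l else 0) := by
          congr 1
          exact Finset.sum_comm
      _ = ∑ j, ∑ l, ((if j < l then T j l else 0) + (if l < j then T j l else 0)) := by
          rw [← Finset.sum_add_distrib]
          exact (Finset.sum_congr rfl fun j _ => Finset.sum_add_distrib).symm
      _ = ∑ j, ∑ l, (T j l - if j = l then T j l else 0) := by
          refine Finset.sum_congr rfl fun j _ => Finset.sum_congr rfl fun l _ => ?_
          rcases lt_trichotomy j l with hlt | heq | hgt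
          · rw [if_pos hlt, if_neg (asymm hlt), if_neg (ne_of_lt hlt), add_zero, sub_zero]
          · subst heq; simp
          · rw [if_neg (asymm hgt), if_pos hgt, if_neg (ne_of_gt hgt), zero_add, sub_zero]
      _ = (∑ j, ∑ l, T j l) - ∑ j, ∑ l, (if j = l then T j l else 0) := by
          rw [← Finset.sum_sub_distrib]
          exact Finset.sum_congr rfl fun j _ => Finset.sum_sub_distrib _ _
      _ = -∑ j, T j j := by
          rw [hsum0, zero_sub]
          congr 1
          refine Finset.sum_congr rfl fun j _ => ?_
          simp
      _ = ∑ j, ((m j : ℝ) * h) • F j := by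
          rw [← Finset.sum_neg_distrib]
          exact Finset.sum_congr rfl fun j _ => by rw [hdiag j, neg_neg]
  have hGam : Gamma n σ h M m = -(Euler n σ h M m) := by
    simp only [Gamma]
    rw [hG, euler_pt hh', neg_add]
    simp [hF, sub_eq_add_neg]
  rw [hGam, hE]
  simp
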